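/- Let m0, m1 ≥ 1 and let r : ℝ → ℝ solve r''(x) = α(x)·r'(x) - β(x)·sin(2r(x)) with α, β as above, and let Z be the unique zero of α (assume m0 ≥ 2 so Z exists). If W(x) = (1/2)·r'(x)² + β(x)·sin²(r(x)), then W is monotone nondecreasing on the interval [Z, ∞). -/

import Mathlib

noncomputable def artanh (x : ℝ) : ℝ := (1/2) * Real.log ((1 + x) / (1 - x))

private theorem tanh_artanh' (y : ℝ) (h1 : -1 < y) (h2 : y < 1) : Real.tanh (artanh y) = y := by
  have h1' : 0 < 1 + y := by linarith
  have h2' : 0 < 1 - y := by linarith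
  set t : ℝ := (1 + y) / (1 - y) with ht
  have htpos : 0 < t := div_pos h1' h2'
  set u : ℝ := Real.exp ((1/2) * Real.log t) with hu
  have hupos : 0 < u := Real.exp_pos _
  have hu2 : u ^ 2 = t := by
    rw [hu, sq, ← Real.exp_add,
      show (1/2) * Real.log t + (1/2) * Real.log t = Real.log t by ring,
      Real.exp_log htpos]
  have hexp_neg : Real.exp (-((1/2) * Real.log t)) = 1 / u := by
    rw [Real.exp_neg, ← hu, one_div]
  have hne : u + 1/u ≠ 0 := by positivity
  have hu' : u ≠ 0 := hupos.ne'
  have hdiv : (u - 1/u)/2 / ((u + 1/u)/2) = (u - 1/u) / (u + 1/u) := by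
    field_simp
  have ha : Real.tanh (artanh y) = (u - 1/u) / (u + 1/u) := by
    rw [Real.tanh_eq_sinh_div_cosh,
      show artanh y = (1/2) * Real.log t from rfl,
      Real.sinh_eq, Real.cosh_eq, hexp_neg, ← hu, hdiv]
  have hu2' : u^2 * (1 - y) = 1 + y := by
    rw [hu2, ht]; field_simp
  rw [ha, div_eq_iff hne]
  field_simp
  nlinarith [hu2']

private theorem tanh_hasDerivAt (x : ℝ) : HasDerivAt Real.tanh (1 / (Real.cosh x)^2) x := by
  have h : HasDerivAt (fun y => Real.sinh y / Real.cosh y)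
      ((Real.cosh x * Real.cosh x - Real.sinh x * Real.sinh x) / (Real.cosh x)^2) x :=
    (Real.hasDerivAt_sinh x).div (Real.hasDerivAt_cosh x) (Real.cosh_pos x).ne'
  have e : (Real.cosh x * Real.cosh x - Real.sinh x * Real.sinh x) = 1 := by
    have := Real.cosh_sq_sub_sinh_sq x; ring_nf; ring_nf at this; linarith
  rw [e] at h
  exact h.congr_of_eventuallyEq (by filter_upwards with y using (Real.tanh_eq_sinh_div_cosh y))

private theorem tanh_mono : Monotone Real.tanh := by
  have hdiff : Differentiable ℝ Real.tanh := fun x => (tanh_hasDerivAt x).differentiableAt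
  refine monotone_of_deriv_nonneg hdiff ?_
  intro x
  rw [(tanh_hasDerivAt x).deriv]
  positivity

/-- The Lyapunov function W(x) = (1/2)·r'(x)² + β(x)·sin²(r(x)) is monotone
nondecreasing on [Z, ∞), where Z is the unique zero of α. -/
theorem lyapunov_W_monotone (m0 m1 : ℕ) (hm0 : 2 ≤ m0) (hm1 : m0 ≤ m1)
    (α β : ℝ → ℝ)
    (hα : ∀ x, α x = (1/2) * (((m0:ℝ) + m1 - 2) * Real.tanh x + m1 - m0))
    (hβ : ∀ x, β x = (1/4) * (((m0:ℝ) + m1) * Real.tanh x + m1 - m0))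
    (r r' : ℝ → ℝ)
    (hr : ∀ x, HasDerivAt r (r' x) x)
    (hr' : ∀ x, HasDerivAt r' (α x * r' x - β x * Real.sin (2 * r x)) x) :
    MonotoneOn (fun y => (1/2) * (r' y)^2 + β y * (Real.sin (r y))^2)
      (Set.Ici (artanh (((m0:ℝ) - m1) / ((m0:ℝ) + m1 - 2)))) := by
  have hm0' : (2:ℝ) ≤ m0 := by exact_mod_cast hm0
  have hm1' : (m0:ℝ) ≤ m1 := by exact_mod_cast hm1
  set Z : ℝ := artanh (((m0:ℝ) - m1) / ((m0:ℝ) + m1 - 2)) with hZ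
  set W' : ℝ → ℝ := fun x => α x * (r' x)^2 +
      (1/4) * (((m0:ℝ) + m1) * (1 / (Real.cosh x)^2)) * (Real.sin (r x))^2 with hW'
  -- derivative of W
  have hβd : ∀ x, HasDerivAt β ((1/4) * (((m0:ℝ) + m1) * (1 / (Real.cosh x)^2))) x := by
    intro x
    have h1 : HasDerivAt (fun y => (1/4) * (((m0:ℝ) + m1) * Real.tanh y + m1 - m0))
        ((1/4) * (((m0:ℝ) + m1) * (1 / (Real.cosh x)^2))) x := by
      have h := (((tanh_hasDerivAt x).const_mul ((m0:ℝ) + m1)).add_const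
        ((m1:ℝ))).sub_const ((m0:ℝ))
      have h2 := h.const_mul (1/4 : ℝ)
      convert h2 using 2
    exact h1.congr_of_eventuallyEq (by filter_upwards with y using (hβ y))
  have hW : ∀ x, HasDerivAt (fun y => (1/2) * (r' y)^2 + β y * (Real.sin (r y))^2) (W' x) x := by
    intro x
    have h1 : HasDerivAt (fun y => (1/2) * (r' y)^2)
        ((1/2) * (2 * (r' x)^1 * (α x * r' x - β x * Real.sin (2 * r x)))) x :=
      ((hr' x).pow 2).const_mul (1/2 : ℝ)
    have hsin : HasDerivAt (fun y => (Real.sin (r y))^2)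
        (2 * (Real.sin (r x))^1 * (Real.cos (r x) * r' x)) x :=
      (((Real.hasDerivAt_sin (r x)).comp x (hr x)).pow 2)
    have h2 := (hβd x).mul hsin
    have h := h1.add h2
    refine h.congr_deriv ?_
    rw [hW', hβ x, Real.sin_two_mul]
    ring
  -- nonnegativity of W' on [Z, ∞)
  have hc1 : (-1:ℝ) < ((m0:ℝ) - m1) / ((m0:ℝ) + m1 - 2) := by
    rw [lt_div_iff₀ (by linarith)]
    nlinarith
  have hc2 : ((m0:ℝ) - m1) / ((m0:ℝ) + m1 - 2) < 1 := by
    rw [div_lt_iff₀ (by linarith)]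
    nlinarith
  have htZ : Real.tanh Z = ((m0:ℝ) - m1) / ((m0:ℝ) + m1 - 2) := tanh_artanh' _ hc1 hc2
  have hαnn : ∀ x ∈ Set.Ici Z, 0 ≤ α x := by
    intro x hx
    rw [hα x]
    have h1 : Real.tanh Z ≤ Real.tanh x := tanh_mono hx
    rw [htZ, div_le_iff₀ (by linarith)] at h1
    nlinarith
  have hW'nn : ∀ x ∈ Set.Ici Z, 0 ≤ W' x := by
    intro x hx
    have h1 : 0 ≤ α x * (r' x)^2 := mul_nonneg (hαnn x hx) (sq_nonneg _)
    have h2 : 0 ≤ (1/4) * (((m0:ℝ) + m1) * (1 / (Real.cosh x)^2)) * (Real.sin (r x))^2 := by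
      positivity
    exact add_nonneg h1 h2
  -- conclude
  refine monotoneOn_of_deriv_nonneg (convex_Ici Z) ?_ ?_ ?_
  · exact fun x _ => (hW x).continuousAt.continuousWithinAt
  · exact fun x _ => ((hW x).differentiableAt).differentiableWithinAt
  · intro x hx
    rw [(hW x).deriv]
    exact hW'nn x (interior_subset hx)
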